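/- (Packing bound) Let P ⊆ V be a k-defective clique with r(P) = k − |E(complement of G[P])| ≥ 0. For v ∈ V \ P define w(v) = |P| − |N(v) ∩ P|. Sort V \ P as v_1, …, v_m in non-decreasing order of weight, and let i* be the largest index i with Σ_{j=1}^{i} w(v_j) ≤ r(P). Then every k-defective clique Q with P ⊆ Q satisfies |Q| ≤ |P| + i*. -/

import Mathlib

open Finset

variable {V : Type*} [Fintype V] [DecidableEq V]

/-- The set of non-edges (missing edges) of the subgraph of `G` induced by `S`,
as a finset of unordered pairs. -/
def nonEdges (G : SimpleGraph V) [DecidableRel G.Adj] (S : Finset V) : Finset (Sym2 V) :=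
  ((S ×ˢ S).filter fun p => p.1 ≠ p.2 ∧ ¬ G.Adj p.1 p.2).image fun p => s(p.1, p.2)

/-- `S` is a `k`-defective clique: the complement of `G[S]` has at most `k` edges. -/
def IsDefClique (G : SimpleGraph V) [DecidableRel G.Adj] (k : ℕ) (S : Finset V) : Prop :=
  (nonEdges G S).card ≤ k

/-- `D` is a `k`-defective set: it is a `k`-defective clique in which every vertex
is non-adjacent to at least one other vertex of `D`. -/
def IsDefSet (G : SimpleGraph V) [DecidableRel G.Adj] (k : ℕ) (D : Finset V) : Prop :=
  (∀ u ∈ D, ∃ v ∈ D, v ≠ u ∧ ¬ G.Adj u v) ∧ IsDefClique G k D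

lemma mem_nonEdges {G : SimpleGraph V} [DecidableRel G.Adj] {S : Finset V} {e : Sym2 V} :
    e ∈ nonEdges G S ↔ ∃ a ∈ S, ∃ b ∈ S, a ≠ b ∧ ¬ G.Adj a b ∧ e = s(a, b) := by
  simp only [nonEdges, mem_image, mem_filter, mem_product, Prod.exists]
  constructor
  · rintro ⟨a, b, ⟨⟨ha, hb⟩, hne, hadj⟩, rfl⟩
    exact ⟨a, ha, b, hb, hne, hadj, rfl⟩
  · rintro ⟨a, ha, b, hb, hne, hadj, rfl⟩
    exact ⟨a, b, ⟨⟨ha, hb⟩, hne, hadj⟩, rfl⟩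

/-- sum over a set whose elements all have value ≥ each element of another set of same card -/
lemma sum_le_sum_of_card_eq {A B : Finset V} (f : V → ℕ) (hc : A.card = B.card)
    (h : ∀ a ∈ A, ∀ b ∈ B, f a ≤ f b) : A.sum f ≤ B.sum f := by
  rcases B.eq_empty_or_nonempty with rfl | hB
  · simp_all [Finset.card_eq_zero.mp hc]
  · obtain ⟨b0, hb0, hmin⟩ := B.exists_min_image f hB
    calc A.sum f ≤ A.sum (fun _ => f b0) := Finset.sum_le_sum fun a ha => h a ha b0 hb0
    _ = B.card * f b0 := by rw [Finset.sum_const, hc]; ring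
    _ ≤ B.sum f := by
        have := Finset.card_nsmul_le_sum B f (f b0) (fun b hb => hmin b hb)
        simpa using this

/-- prefix of sorted list has minimal sum among subsets of given size -/
lemma prefix_sum_le {w : V → ℕ} {l : List V} (hnd : l.Nodup)
    (hsort : l.Pairwise fun a b => w a ≤ w b) {t : ℕ} (ht : t ≤ l.length)
    {T : Finset V} (hT : T ⊆ l.toFinset) (hTc : T.card = t) :
    ((l.take t).map w).sum ≤ T.sum w := by
  set pre : Finset V := (l.take t).toFinset with hpre
  have hndtake : (l.take t).Nodup := hnd.sublist (List.take_sublist t l)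
  have hprec : pre.card = t := by
    rw [hpre, List.toFinset_card_of_nodup hndtake, List.length_take]; omega
  have hsum : ((l.take t).map w).sum = pre.sum w := (List.sum_toFinset w hndtake).symm
  rw [hsum]
  have key : (pre \ T).sum w ≤ (T \ pre).sum w := by
    apply sum_le_sum_of_card_eq
    · have h1 := Finset.card_sdiff_add_card_inter pre T
      have h2 := Finset.card_sdiff_add_card_inter T pre
      rw [Finset.inter_comm T pre] at h2
      omega
    · intro a ha b hb
      have hal : a ∈ l.take t := by
        have := Finset.mem_sdiff.mp ha
        simpa [hpre] using this.1
      have hbl : b ∈ l.drop t := by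
        have hbT := Finset.mem_sdiff.mp hb
        have hbl : b ∈ l := by simpa using hT hbT.1
        have : b ∈ l.take t ++ l.drop t := by rwa [List.take_append_drop]
        rcases List.mem_append.mp this with h | h
        · exact absurd (by simpa [hpre] using h) hbT.2
        · exact h
      have : l.Pairwise fun a b => w a ≤ w b := hsort
      rw [← List.take_append_drop t l, List.pairwise_append] at this
      exact this.2.2 a hal b hbl
  have e1 : (pre \ T).sum w + (T ∩ pre).sum w = pre.sum w := by
    rw [Finset.inter_comm T pre, ← Finset.sdiff_inter_self_left pre T]
    exact Finset.sum_sdiff Finset.inter_subset_left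
  have e2 : (T \ pre).sum w + (T ∩ pre).sum w = T.sum w := by
    rw [← Finset.sdiff_inter_self_left T pre]
    exact Finset.sum_sdiff Finset.inter_subset_left
  omega

/-- Packing bound: sort `V \ P` as `v_1, …, v_m` by non-decreasing weight
`w(v) = |P| - |N(v) ∩ P|`; if `i*` is the largest `i` with `Σ_{j≤i} w(v_j) ≤ r(P)`,
then every `k`-defective clique `Q ⊇ P` has `|Q| ≤ |P| + i*`. -/
theorem packing_bound (G : SimpleGraph V) [DecidableRel G.Adj] (k : ℕ) (P : Finset V)
    (hP : IsDefClique G k P)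
    (w : V → ℕ) (hw : ∀ v, w v = P.card - (G.neighborFinset v ∩ P).card)
    (l : List V) (hnd : l.Nodup) (hmem : ∀ v, v ∈ l ↔ v ∉ P)
    (hsort : l.Pairwise fun a b => w a ≤ w b)
    (istar : ℕ) (histar : istar ≤ l.length)
    (h1 : ((l.take istar).map w).sum ≤ k - (nonEdges G P).card)
    (h2 : ∀ i ≤ l.length, ((l.take i).map w).sum ≤ k - (nonEdges G P).card → i ≤ istar)
    (Q : Finset V) (hQ : IsDefClique G k Q) (hPQ : P ⊆ Q) :
    Q.card ≤ P.card + istar := by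
  classical
  set Sv : V → Finset (Sym2 V) := fun v => (P \ G.neighborFinset v).image fun u => s(v, u)
    with hSv
  -- card of Sv v is w v
  have hScard : ∀ v, (Sv v).card = w v := by
    intro v
    have hinj : Function.Injective (fun u => s(v, u)) := fun a b h => (Sym2.congr_right).mp h
    rw [hSv]
    simp only
    rw [Finset.card_image_of_injective _ hinj, hw v]
    have := Finset.card_sdiff_add_card_inter P (G.neighborFinset v)
    rw [Finset.inter_comm] at this
    omega
  -- Sv v ⊆ nonEdges G Q for v ∈ Q \ P
  have hSsub : ∀ v ∈ Q \ P, Sv v ⊆ nonEdges G Q := by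
    intro v hv e he
    obtain ⟨u, hu, rfl⟩ := Finset.mem_image.mp he
    obtain ⟨huP, huN⟩ := Finset.mem_sdiff.mp hu
    obtain ⟨hvQ, hvP⟩ := Finset.mem_sdiff.mp hv
    refine mem_nonEdges.mpr ⟨v, hvQ, u, hPQ huP, ?_, ?_, rfl⟩
    · rintro rfl; exact hvP huP
    · rwa [SimpleGraph.mem_neighborFinset] at huN
  -- elements of Sv v contain v, and v ∉ P while the other endpoint is in P
  have hSv_elem : ∀ v, ∀ e ∈ Sv v, ∃ u ∈ P, e = s(v, u) := by
    intro v e he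
    obtain ⟨u, hu, rfl⟩ := Finset.mem_image.mp he
    exact ⟨u, (Finset.mem_sdiff.mp hu).1, rfl⟩
  -- pairwise disjoint
  have hpd : ∀ v₁ ∈ Q \ P, ∀ v₂ ∈ Q \ P, v₁ ≠ v₂ → Disjoint (Sv v₁) (Sv v₂) := by
    intro v₁ hv₁ v₂ hv₂ hne
    rw [Finset.disjoint_left]
    intro e he1 he2
    obtain ⟨u₁, hu₁, rfl⟩ := hSv_elem v₁ e he1
    obtain ⟨u₂, hu₂, heq⟩ := hSv_elem v₂ _ he2
    have hv₁P := (Finset.mem_sdiff.mp hv₁).2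
    have hv₂P := (Finset.mem_sdiff.mp hv₂).2
    rcases Sym2.eq_iff.mp heq with ⟨h, _⟩ | ⟨h, h'⟩
    · exact hne h
    · exact hv₁P (h ▸ hu₂)
  -- disjoint from nonEdges G P
  have hdisj2 : Disjoint (nonEdges G P) ((Q \ P).biUnion Sv) := by
    rw [Finset.disjoint_left]
    intro e heP heB
    obtain ⟨a, haP, b, hbP, _, _, rfl⟩ := mem_nonEdges.mp heP
    obtain ⟨v, hv, hev⟩ := Finset.mem_biUnion.mp heB
    obtain ⟨u, _, heq⟩ := hSv_elem v _ hev
    have hvP := (Finset.mem_sdiff.mp hv).2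
    rcases Sym2.eq_iff.mp heq with ⟨h, _⟩ | ⟨_, h⟩
    · exact hvP (h ▸ haP)
    · exact hvP (h ▸ hbP)
  -- counting
  have hcount : (nonEdges G P).card + (Q \ P).sum w ≤ k := by
    have hsub : nonEdges G P ∪ (Q \ P).biUnion Sv ⊆ nonEdges G Q := by
      apply Finset.union_subset
      · intro e he
        obtain ⟨a, ha, b, hb, hne, hadj, rfl⟩ := mem_nonEdges.mp he
        exact mem_nonEdges.mpr ⟨a, hPQ ha, b, hPQ hb, hne, hadj, rfl⟩
      · intro e he
        obtain ⟨v, hv, hev⟩ := Finset.mem_biUnion.mp he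
        exact hSsub v hv hev
    have hcard : (nonEdges G P ∪ (Q \ P).biUnion Sv).card
        = (nonEdges G P).card + (Q \ P).sum w := by
      rw [Finset.card_union_of_disjoint hdisj2, Finset.card_biUnion hpd]
      simp [hScard]
    calc (nonEdges G P).card + (Q \ P).sum w
        = (nonEdges G P ∪ (Q \ P).biUnion Sv).card := hcard.symm
      _ ≤ (nonEdges G Q).card := Finset.card_le_card hsub
      _ ≤ k := hQ
  -- apply sorted prefix lemma
  have hsubl : Q \ P ⊆ l.toFinset := by
    intro v hv
    rw [List.mem_toFinset, hmem]
    exact (Finset.mem_sdiff.mp hv).2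
  have hlen : l.toFinset.card = l.length := List.toFinset_card_of_nodup hnd
  have ht : (Q \ P).card ≤ l.length := by
    rw [← hlen]; exact Finset.card_le_card hsubl
  have hps := prefix_sum_le hnd hsort ht hsubl rfl
  have hsumle : ((l.take (Q \ P).card).map w).sum ≤ k - (nonEdges G P).card := by
    have : (Q \ P).sum w ≤ k - (nonEdges G P).card := by omega
    omega
  have := h2 (Q \ P).card ht hsumle
  have hQcard : (Q \ P).card + P.card = Q.card := Finset.card_sdiff_add_card_eq_card hPQ
  omega
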